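/- Almost-sure convergence under square-summable perturbations (stochastic core of Proposition 1): let (Ω, 𝔉, μ) be a probability space with a filtration (𝔉_t)_{t∈ℕ}, let (X_t)_{t∈ℕ} be a sequence of nonnegative, integrable random variables adapted to (𝔉_t), let c ≥ 0, and let (η_t)_{t∈ℕ} be a real sequence with Σ_{t=1}^{∞} η_t² < ∞. If for every t the conditional expectation satisfies E[X_{t+1} | 𝔉_t] ≤ X_t + c·η_t² almost surely, then (X_t) converges almost surely to a nonnegative random variable X_∞. -/

import Mathlib

open MeasureTheory Filter
open scoped ENNReal NNReal

/-- Almost-sure convergence under square-summable perturbations (stochastic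
core of Proposition 1): if `(X t)` is a nonnegative, integrable, adapted
process with `E[X (t+1) | 𝔉 t] ≤ X t + c * η t ^ 2` a.s. and `∑ η t ^ 2 < ∞`,
then `X t` converges almost surely to a nonnegative random variable. -/
theorem almost_sure_convergence_square_summable
    {Ω : Type*} {m : MeasurableSpace Ω} {μ : Measure Ω} [IsProbabilityMeasure μ]
    (𝔉 : Filtration ℕ m)
    (X : ℕ → Ω → ℝ) (c : ℝ) (hc : 0 ≤ c) (η : ℕ → ℝ)
    (hη : Summable (fun t => η t ^ 2))
    (hadapted : Adapted 𝔉 X)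
    (hint : ∀ t, Integrable (X t) μ)
    (hnonneg : ∀ t, 0 ≤ᵐ[μ] X t)
    (hcond : ∀ t, μ[X (t + 1) | 𝔉 t] ≤ᵐ[μ] fun ω => X t ω + c * η t ^ 2) :
    ∃ Xinf : Ω → ℝ, (0 ≤ᵐ[μ] Xinf) ∧
      ∀ᵐ ω ∂μ, Tendsto (fun t => X t ω) atTop (nhds (Xinf ω)) := by
  classical
  -- tail sums
  set T : ℕ → ℝ := fun t => ∑' s, η (s + t) ^ 2 with hT
  have hTsum : ∀ t, Summable (fun s => η (s + t) ^ 2) := fun t =>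
    (summable_nat_add_iff t).2 hη
  have hTrec : ∀ t, T t = η t ^ 2 + T (t + 1) := by
    intro t
    have := Summable.tsum_eq_zero_add (hTsum t)
    simp only [zero_add] at this
    rw [hT]
    simp only
    rw [this]
    congr 1
    · congr 1
      ext s
      congr 2
      omega
  have hTnonneg : ∀ t, 0 ≤ T t := fun t => tsum_nonneg fun s => sq_nonneg _
  have hTtendsto : Tendsto T atTop (nhds 0) := by
    have := tendsto_sum_nat_add (fun t => η t ^ 2)
    simpa [hT] using this
  -- the supermartingale Y
  set Y : ℕ → Ω → ℝ := fun t ω => X t ω + c * T t with hY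
  have hYadp : Adapted 𝔉 Y := fun t =>
    (hadapted t).add measurable_const
  have hYint : ∀ t, Integrable (Y t) μ := fun t =>
    (hint t).add (integrable_const _)
  have hYcond : ∀ t, μ[Y (t + 1) | 𝔉 t] ≤ᵐ[μ] Y t := by
    intro t
    have h1 : μ[Y (t + 1) | 𝔉 t] =ᵐ[μ]
        fun ω => (μ[X (t + 1) | 𝔉 t]) ω + c * T (t + 1) := by
      have := condExp_add (m := 𝔉 t) (μ := μ) (hint (t + 1))
        (integrable_const (c * T (t + 1)))
      refine this.trans ?_
      refine Filter.Eventually.of_forall fun ω => ?_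
      simp [condExp_const (𝔉.le t) (c * T (t + 1)) (μ := μ)]
    filter_upwards [h1, hcond t] with ω h1ω h2ω
    rw [hY]
    simp only
    rw [h1ω, hTrec t]
    calc (μ[X (t + 1)|𝔉 t]) ω + c * T (t + 1)
        ≤ (X t ω + c * η t ^ 2) + c * T (t + 1) := by linarith
      _ = X t ω + c * (η t ^ 2 + T (t + 1)) := by ring
  have hYsuper : Supermartingale Y 𝔉 μ := supermartingale_nat (fun t => (hYadp t).stronglyMeasurable) hYint hYcond
  have hYnonneg : ∀ t, 0 ≤ᵐ[μ] Y t := by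
    intro t
    filter_upwards [hnonneg t] with ω hω
    have h0 : (0:ℝ) ≤ X t ω := hω
    have := mul_nonneg hc (hTnonneg t)
    simp only [hY, Pi.zero_apply]
    linarith
  -- L¹ bound
  set R : ℝ≥0 := (∫ ω, Y 0 ω ∂μ).toNNReal with hR
  have hbdd : ∀ n, eLpNorm (Y n) 1 μ ≤ R := by
    intro n
    have hle : ∫ ω, Y n ω ∂μ ≤ ∫ ω, Y 0 ω ∂μ := by
      have := hYsuper.setIntegral_le (Nat.zero_le n) (MeasurableSet.univ (α := Ω))
      simpa using this
    have h1 : eLpNorm (Y n) 1 μ = ENNReal.ofReal (∫ ω, ‖Y n ω‖ ∂μ) := by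
      rw [eLpNorm_one_eq_lintegral_enorm,
        ofReal_integral_norm_eq_lintegral_enorm (hYint n)]
    have h2 : ∫ ω, ‖Y n ω‖ ∂μ = ∫ ω, Y n ω ∂μ := by
      refine integral_congr_ae ?_
      filter_upwards [hYnonneg n] with ω hω
      exact Real.norm_of_nonneg hω
    rw [h1, h2]
    have : (R : ℝ≥0∞) = ENNReal.ofReal (∫ ω, Y 0 ω ∂μ) := by
      rw [hR, ENNReal.ofReal]
    rw [this]
    exact ENNReal.ofReal_le_ofReal hle
  -- convergence of Y
  have hYconv := hYsuper.neg.exists_ae_tendsto_of_bdd (R := R) (fun n => by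
    simpa using hbdd n)
  -- pick the limit
  have hXconv : ∀ᵐ ω ∂μ, ∃ l, Tendsto (fun t => X t ω) atTop (nhds l) := by
    filter_upwards [hYconv] with ω ⟨l, hl⟩
    refine ⟨-l, ?_⟩
    have hYl : Tendsto (fun t => Y t ω) atTop (nhds (-l)) := by
      have := hl.neg
      simpa using this
    have hXeq : ∀ t, X t ω = Y t ω - c * T t := fun t => by simp [hY]
    have : Tendsto (fun t => Y t ω - c * T t) atTop (nhds (-l - c * 0)) :=
      hYl.sub (hTtendsto.const_mul c)
    simpa [hXeq, funext_iff] using (by simpa using this : Tendsto (fun t => Y t ω - c * T t) atTop (nhds (-l)))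
  -- define the limit function
  set Xinf : Ω → ℝ := fun ω =>
    if h : ∃ l, Tendsto (fun t => X t ω) atTop (nhds l) then h.choose else 0
    with hXinf
  have hconv : ∀ᵐ ω ∂μ, Tendsto (fun t => X t ω) atTop (nhds (Xinf ω)) := by
    filter_upwards [hXconv] with ω hω
    rw [hXinf]
    simp only [dif_pos hω]
    exact hω.choose_spec
  refine ⟨Xinf, ?_, hconv⟩
  have hall : ∀ᵐ ω ∂μ, ∀ t, 0 ≤ X t ω := ae_all_iff.2 hnonneg
  filter_upwards [hconv, hall] with ω h1 h2
  exact le_of_tendsto_of_tendsto tendsto_const_nhds h1 (Eventually.of_forall h2)
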